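/- For every integer m ≥ 8, the graph G_m, constructed from 4m+2 copies L¹,...,L^{4m+2} of the linear graph L_{2m} via the identifications I1–I6, is a connected tree. -/

import Mathlib

/-- A vertex of the disjoint union of the `4m+2` copies of `L_{2m}`:
`(k, i)` is the vertex `v_i` of the copy `L^k`, with `1 ≤ k ≤ 4m+2` and
`0 ≤ i ≤ 2m`. -/
def VOk (m : ℕ) (p : ℕ × ℕ) : Prop :=
  1 ≤ p.1 ∧ p.1 ≤ 4 * m + 2 ∧ p.2 ≤ 2 * m

/-- Vertices of the disjoint union of the copies `L¹, …, L^{4m+2}` of `L_{2m}`. -/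
def Vm (m : ℕ) := { p : ℕ × ℕ // VOk m p }

/-- The identifications I1–I6 defining `G_m`. -/
def glueRel (m : ℕ) : Vm m → Vm m → Prop := fun x y =>
  (∃ t, 1 ≤ t ∧ t + 1 ≤ m ∧ x.1 = (t, t - 1) ∧ y.1 = (t + 1, t + 2)) ∨
  (∃ t, m + 1 ≤ t ∧ t + 1 ≤ 2 * m ∧ x.1 = (t, t - 2) ∧ y.1 = (t + 1, t + 1)) ∨
  (x.1 = (1, 2) ∧ y.1 = (2 * m, 2 * m - 2)) ∨
  (∃ t, 1 ≤ t ∧ t ≤ m ∧ x.1 = (t, t) ∧ y.1 = (2 * m + t, 2 * m - 5)) ∨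
  (∃ t, m + 1 ≤ t ∧ t ≤ 2 * m ∧ x.1 = (t, t - 1) ∧ y.1 = (2 * m + t, 5)) ∨
  (x.1 = (1, 0) ∧ y.1 = (4 * m + 1, 6)) ∨
  (x.1 = (4 * m + 2, 2 * m - 6) ∧ y.1 = (2 * m, 2 * m))

/-- The vertex set of `G_m`: the quotient of the disjoint union of the copies
of `L_{2m}` by the identifications I1–I6. -/
def Qm (m : ℕ) := Quot (glueRel m)

/-- Projection to the quotient. -/
def mkQ (m : ℕ) : Vm m → Qm m := Quot.mk (glueRel m)

/-- `x` and `y` are the endpoints of an edge of one of the copies of `L_{2m}`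
(`y` is the upper endpoint). -/
def EdgeV (m : ℕ) (x y : Vm m) : Prop :=
  x.1.1 = y.1.1 ∧ x.1.2 + 1 = y.1.2

/-- The graph `G_m`. -/
def Gm (m : ℕ) : SimpleGraph (Qm m) where
  Adj q q' := q ≠ q' ∧
    ∃ x y : Vm m, (EdgeV m x y ∨ EdgeV m y x) ∧ q = mkQ m x ∧ q' = mkQ m y
  symm := by
    constructor
    rintro q q' ⟨h, x, y, he, hx, hy⟩
    exact ⟨h.symm, y, x, by tauto, hy, hx⟩
  loopless := by constructor; rintro q ⟨h, -⟩; exact h rfl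

/-! ### Auxiliary definitions -/

def apx (m k : ℕ) : ℕ :=
  if k = 1 then 1 else if k ≤ m then k + 1 else if k ≤ 2 * m then k - 2
  else if k ≤ 3 * m then 2 * m - 5 else if k ≤ 4 * m then 5
  else if k = 4 * m + 1 then 6 else 2 * m - 6

def cst (m k : ℕ) : ℕ :=
  if k = 1 then 0 else if k ≤ m then 2 * k - 3 else if k ≤ 2 * m then 1 + 2 * (2 * m - k)
  else if k ≤ 3 * m then 2 * (k - 2 * m) - 2 else if k ≤ 4 * m then 2 + 2 * (4 * m - k)
  else if k = 4 * m + 1 then 1 else 3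

def dd (m : ℕ) (p : ℕ × ℕ) : ℕ :=
  (apx m p.1 - p.2) + (p.2 - apx m p.1) + cst m p.1

def nu (m : ℕ) (p : ℕ × ℕ) : ℕ × ℕ :=
  if 2 ≤ p.1 ∧ p.1 ≤ m ∧ p.2 = p.1 + 1 then (p.1 - 1, p.1 - 2)
  else if m + 1 ≤ p.1 ∧ p.1 ≤ 2 * m - 1 ∧ p.2 = p.1 - 2 then (p.1 + 1, p.1 + 1)
  else if p.1 = 2 * m ∧ p.2 = 2 * m - 2 then (1, 2)
  else if 2 * m + 1 ≤ p.1 ∧ p.1 ≤ 3 * m ∧ p.2 = 2 * m - 5 then (p.1 - 2 * m, p.1 - 2 * m)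
  else if 3 * m + 1 ≤ p.1 ∧ p.1 ≤ 4 * m ∧ p.2 = 5 then (p.1 - 2 * m, p.1 - 2 * m - 1)
  else if p.1 = 4 * m + 1 ∧ p.2 = 6 then (1, 0)
  else if p.1 = 4 * m + 2 ∧ p.2 = 2 * m - 6 then (2 * m, 2 * m)
  else p

/-! ### eval lemmas -/

lemma dd_mk' (m k i : ℕ) : dd m (k, i) = (apx m k - i) + (i - apx m k) + cst m k := rfl

lemma apx1 {m : ℕ} : apx m 1 = 1 ∧ cst m 1 = 0 := by
  constructor <;> simp [apx, cst]

lemma apx2 {m k : ℕ} (h1 : 2 ≤ k) (h2 : k ≤ m) : apx m k = k + 1 ∧ cst m k = 2 * k - 3 := by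
  constructor <;> (simp only [apx, cst]; split_ifs <;> omega)

lemma apx3 {m k : ℕ} (h1 : m + 1 ≤ k) (h2 : k ≤ 2 * m) :
    apx m k = k - 2 ∧ cst m k = 1 + 2 * (2 * m - k) := by
  constructor <;> (simp only [apx, cst]; split_ifs <;> omega)

lemma apx4 {m k : ℕ} (h1 : 2 * m + 1 ≤ k) (h2 : k ≤ 3 * m) :
    apx m k = 2 * m - 5 ∧ cst m k = 2 * (k - 2 * m) - 2 := by
  constructor <;> (simp only [apx, cst]; split_ifs <;> omega)

lemma apx5 {m k : ℕ} (h1 : 3 * m + 1 ≤ k) (h2 : k ≤ 4 * m) :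
    apx m k = 5 ∧ cst m k = 2 + 2 * (4 * m - k) := by
  constructor <;> (simp only [apx, cst]; split_ifs <;> omega)

lemma apx6 {m : ℕ} (hm : 1 ≤ m) : apx m (4 * m + 1) = 6 ∧ cst m (4 * m + 1) = 1 := by
  constructor <;> (simp only [apx, cst]; split_ifs <;> omega)

lemma apx7 {m : ℕ} (hm : 1 ≤ m) : apx m (4 * m + 2) = 2 * m - 6 ∧ cst m (4 * m + 2) = 3 := by
  constructor <;> (simp only [apx, cst]; split_ifs <;> omega)

lemma apx_le {m k : ℕ} (hm : 8 ≤ m) (h1 : 1 ≤ k) (h2 : k ≤ 4 * m + 2) : apx m k ≤ 2 * m := by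
  simp only [apx]; split_ifs <;> omega

lemma dd_glue {m : ℕ} (hm : 8 ≤ m) (x y : Vm m) (h : glueRel m x y) :
    dd m x.1 = dd m y.1 := by
  rcases h with ⟨t, h1, h2, hx, hy⟩ | ⟨t, h1, h2, hx, hy⟩ | ⟨hx, hy⟩ | ⟨t, h1, h2, hx, hy⟩ |
    ⟨t, h1, h2, hx, hy⟩ | ⟨hx, hy⟩ | ⟨hx, hy⟩ <;> rw [hx, hy, dd_mk', dd_mk']
  · rcases Nat.lt_or_ge t 2 with ht | ht
    · have ht1 : t = 1 := by omega
      subst ht1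
      rw [apx1.1, apx1.2, (apx2 (by omega) (by omega)).1, (apx2 (by omega) (by omega)).2]
      all_goals omega
    · rw [(apx2 ht (by omega)).1, (apx2 ht (by omega)).2,
        (apx2 (by omega) (by omega)).1, (apx2 (by omega) (by omega)).2]
      all_goals omega
  · rw [(apx3 h1 (by omega)).1, (apx3 h1 (by omega)).2,
      (apx3 (by omega) (by omega)).1, (apx3 (by omega) (by omega)).2]
    all_goals omega
  · rw [apx1.1, apx1.2, (apx3 (by omega) (by omega)).1, (apx3 (by omega) (by omega)).2]
    all_goals omega
  · rcases Nat.lt_or_ge t 2 with ht | ht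
    · have ht1 : t = 1 := by omega
      subst ht1
      rw [apx1.1, apx1.2, (apx4 (by omega) (by omega)).1, (apx4 (by omega) (by omega)).2]
      all_goals omega
    · rw [(apx2 ht h2).1, (apx2 ht h2).2,
        (apx4 (by omega) (by omega)).1, (apx4 (by omega) (by omega)).2]
      all_goals omega
  · rw [(apx3 h1 h2).1, (apx3 h1 h2).2,
      (apx5 (by omega) (by omega)).1, (apx5 (by omega) (by omega)).2]
    all_goals omega
  · rw [apx1.1, apx1.2, (apx6 (by omega)).1, (apx6 (by omega)).2]
    all_goals omega
  · rw [(apx7 (by omega)).1, (apx7 (by omega)).2,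
      (apx3 (by omega) (by omega)).1, (apx3 (by omega) (by omega)).2]
    all_goals omega

section nuEval
variable {m k i : ℕ}

lemma nuA (h1 : 2 ≤ k ∧ k ≤ m ∧ i = k + 1) :
    nu m (k, i) = (k - 1, k - 2) := by
  simp only [nu, if_pos h1]

lemma nuB (n1 : ¬(2 ≤ k ∧ k ≤ m ∧ i = k + 1))
    (h2 : m + 1 ≤ k ∧ k ≤ 2 * m - 1 ∧ i = k - 2) :
    nu m (k, i) = (k + 1, k + 1) := by
  simp only [nu, if_neg n1, if_pos h2]

lemma nuC (n1 : ¬(2 ≤ k ∧ k ≤ m ∧ i = k + 1))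
    (n2 : ¬(m + 1 ≤ k ∧ k ≤ 2 * m - 1 ∧ i = k - 2))
    (h3 : k = 2 * m ∧ i = 2 * m - 2) :
    nu m (k, i) = (1, 2) := by
  simp only [nu, if_neg n1, if_neg n2, if_pos h3]

lemma nuD (n1 : ¬(2 ≤ k ∧ k ≤ m ∧ i = k + 1))
    (n2 : ¬(m + 1 ≤ k ∧ k ≤ 2 * m - 1 ∧ i = k - 2))
    (n3 : ¬(k = 2 * m ∧ i = 2 * m - 2))
    (h4 : 2 * m + 1 ≤ k ∧ k ≤ 3 * m ∧ i = 2 * m - 5) :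
    nu m (k, i) = (k - 2 * m, k - 2 * m) := by
  simp only [nu, if_neg n1, if_neg n2, if_neg n3, if_pos h4]

lemma nuE (n1 : ¬(2 ≤ k ∧ k ≤ m ∧ i = k + 1))
    (n2 : ¬(m + 1 ≤ k ∧ k ≤ 2 * m - 1 ∧ i = k - 2))
    (n3 : ¬(k = 2 * m ∧ i = 2 * m - 2))
    (n4 : ¬(2 * m + 1 ≤ k ∧ k ≤ 3 * m ∧ i = 2 * m - 5))
    (h5 : 3 * m + 1 ≤ k ∧ k ≤ 4 * m ∧ i = 5) :
    nu m (k, i) = (k - 2 * m, k - 2 * m - 1) := by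
  simp only [nu, if_neg n1, if_neg n2, if_neg n3, if_neg n4, if_pos h5]

lemma nuF (n1 : ¬(2 ≤ k ∧ k ≤ m ∧ i = k + 1))
    (n2 : ¬(m + 1 ≤ k ∧ k ≤ 2 * m - 1 ∧ i = k - 2))
    (n3 : ¬(k = 2 * m ∧ i = 2 * m - 2))
    (n4 : ¬(2 * m + 1 ≤ k ∧ k ≤ 3 * m ∧ i = 2 * m - 5))
    (n5 : ¬(3 * m + 1 ≤ k ∧ k ≤ 4 * m ∧ i = 5))
    (h6 : k = 4 * m + 1 ∧ i = 6) :
    nu m (k, i) = (1, 0) := by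
  simp only [nu, if_neg n1, if_neg n2, if_neg n3, if_neg n4, if_neg n5, if_pos h6]

lemma nuG (n1 : ¬(2 ≤ k ∧ k ≤ m ∧ i = k + 1))
    (n2 : ¬(m + 1 ≤ k ∧ k ≤ 2 * m - 1 ∧ i = k - 2))
    (n3 : ¬(k = 2 * m ∧ i = 2 * m - 2))
    (n4 : ¬(2 * m + 1 ≤ k ∧ k ≤ 3 * m ∧ i = 2 * m - 5))
    (n5 : ¬(3 * m + 1 ≤ k ∧ k ≤ 4 * m ∧ i = 5))
    (n6 : ¬(k = 4 * m + 1 ∧ i = 6))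
    (h7 : k = 4 * m + 2 ∧ i = 2 * m - 6) :
    nu m (k, i) = (2 * m, 2 * m) := by
  simp only [nu, if_neg n1, if_neg n2, if_neg n3, if_neg n4, if_neg n5, if_neg n6, if_pos h7]

lemma nuId (n1 : ¬(2 ≤ k ∧ k ≤ m ∧ i = k + 1))
    (n2 : ¬(m + 1 ≤ k ∧ k ≤ 2 * m - 1 ∧ i = k - 2))
    (n3 : ¬(k = 2 * m ∧ i = 2 * m - 2))
    (n4 : ¬(2 * m + 1 ≤ k ∧ k ≤ 3 * m ∧ i = 2 * m - 5))
    (n5 : ¬(3 * m + 1 ≤ k ∧ k ≤ 4 * m ∧ i = 5))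
    (n6 : ¬(k = 4 * m + 1 ∧ i = 6))
    (n7 : ¬(k = 4 * m + 2 ∧ i = 2 * m - 6)) :
    nu m (k, i) = (k, i) := by
  simp only [nu, if_neg n1, if_neg n2, if_neg n3, if_neg n4, if_neg n5, if_neg n6, if_neg n7]

end nuEval

lemma nu_glue {m : ℕ} (hm : 8 ≤ m) (x y : Vm m) (h : glueRel m x y) :
    nu m x.1 = nu m y.1 := by
  rcases h with ⟨t, h1, h2, hx, hy⟩ | ⟨t, h1, h2, hx, hy⟩ | ⟨hx, hy⟩ | ⟨t, h1, h2, hx, hy⟩ |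
    ⟨t, h1, h2, hx, hy⟩ | ⟨hx, hy⟩ | ⟨hx, hy⟩ <;> rw [hx, hy]
  · rw [nuId (by omega) (by omega) (by omega) (by omega) (by omega) (by omega) (by omega),
      nuA (by omega)]
    rw [Prod.mk.injEq]; omega
  · rw [nuB (by omega) (by omega),
      nuId (by omega) (by omega) (by omega) (by omega) (by omega) (by omega) (by omega)]
  · rw [nuId (by omega) (by omega) (by omega) (by omega) (by omega) (by omega) (by omega),
      nuC (by omega) (by omega) (by omega)]
  · rw [nuId (by omega) (by omega) (by omega) (by omega) (by omega) (by omega) (by omega),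
      nuD (by omega) (by omega) (by omega) (by omega)]
    rw [Prod.mk.injEq]; omega
  · rw [nuId (by omega) (by omega) (by omega) (by omega) (by omega) (by omega) (by omega),
      nuE (by omega) (by omega) (by omega) (by omega) (by omega)]
    rw [Prod.mk.injEq]; omega
  · rw [nuId (by omega) (by omega) (by omega) (by omega) (by omega) (by omega) (by omega),
      nuF (by omega) (by omega) (by omega) (by omega) (by omega) (by omega)]
  · rw [nuG (by omega) (by omega) (by omega) (by omega) (by omega) (by omega) (by omega),
      nuId (by omega) (by omega) (by omega) (by omega) (by omega) (by omega) (by omega)]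

lemma nu_fix {m : ℕ} (hm : 8 ≤ m) {p : ℕ × ℕ} (hok : VOk m p)
    (hna : p.2 ≠ apx m p.1) : nu m p = p := by
  obtain ⟨hk1, hk2, hi⟩ := hok
  have hp : p = (p.1, p.2) := rfl
  rw [hp]; apply nuId <;> intro hc
  · have := (apx2 hc.1 hc.2.1).1; omega
  · have := (apx3 hc.1 (by omega)).1; omega
  · have e : apx m p.1 = p.1 - 2 := (apx3 (by omega) (by omega)).1; omega
  · have := (apx4 hc.1 hc.2.1).1; omega
  · have := (apx5 hc.1 hc.2.1).1; omega
  · have e : apx m p.1 = 6 := by rw [hc.1]; exact (apx6 (by omega)).1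
    omega
  · have e : apx m p.1 = 2 * m - 6 := by rw [hc.1]; exact (apx7 (by omega)).1
    omega

lemma dd_zero {m : ℕ} (hm : 8 ≤ m) {p : ℕ × ℕ} (hok : VOk m p) (h : dd m p = 0) :
    p = (1, 1) ∨ p = (2 * m + 1, 2 * m - 5) := by
  obtain ⟨hk1, hk2, hi⟩ := hok
  have hd : dd m p = (apx m p.1 - p.2) + (p.2 - apx m p.1) + cst m p.1 := rfl
  rcases (by omega : p.1 = 1 ∨ (2 ≤ p.1 ∧ p.1 ≤ m) ∨ (m + 1 ≤ p.1 ∧ p.1 ≤ 2 * m) ∨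
      (2 * m + 1 ≤ p.1 ∧ p.1 ≤ 3 * m) ∨ (3 * m + 1 ≤ p.1 ∧ p.1 ≤ 4 * m) ∨
      p.1 = 4 * m + 1 ∨ p.1 = 4 * m + 2) with h1 | h1 | h1 | h1 | h1 | h1 | h1
  · have e : apx m p.1 = 1 ∧ cst m p.1 = 0 := by rw [h1]; exact apx1
    simp only [Prod.ext_iff]; omega
  · have e := apx2 h1.1 h1.2; simp only [Prod.ext_iff]; omega
  · have e := apx3 h1.1 h1.2; simp only [Prod.ext_iff]; omega
  · have e := apx4 h1.1 h1.2; simp only [Prod.ext_iff]; omega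
  · have e := apx5 h1.1 h1.2; simp only [Prod.ext_iff]; omega
  · have e : apx m p.1 = 6 ∧ cst m p.1 = 1 := by rw [h1]; exact apx6 (by omega)
    simp only [Prod.ext_iff]; omega
  · have e : apx m p.1 = 2 * m - 6 ∧ cst m p.1 = 3 := by rw [h1]; exact apx7 (by omega)
    simp only [Prod.ext_iff]; omega

lemma dd_mkQ {m : ℕ} (hm : 8 ≤ m) {x y : Vm m} (h : mkQ m x = mkQ m y) :
    dd m x.1 = dd m y.1 := by
  have h' : Relation.EqvGen (glueRel m) x y := Quot.eqvGen_exact h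
  clear h
  induction h' with
  | rel a b hab => exact dd_glue hm a b hab
  | refl a => rfl
  | symm a b _ ih => exact ih.symm
  | trans a b c _ _ ih1 ih2 => exact ih1.trans ih2

lemma nu_mkQ {m : ℕ} (hm : 8 ≤ m) {x y : Vm m} (h : mkQ m x = mkQ m y) :
    nu m x.1 = nu m y.1 := by
  have h' : Relation.EqvGen (glueRel m) x y := Quot.eqvGen_exact h
  clear h
  induction h' with
  | rel a b hab => exact nu_glue hm a b hab
  | refl a => rfl
  | symm a b _ ih => exact ih.symm
  | trans a b c _ _ ih1 ih2 => exact ih1.trans ih2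

lemma step_exists {m : ℕ} (hm : 8 ≤ m) (p : Vm m) (hna : p.1.2 ≠ apx m p.1.1) :
    ∃ z : Vm m, (EdgeV m p z ∨ EdgeV m z p) ∧ dd m z.1 + 1 = dd m p.1 := by
  obtain ⟨hk1, hk2, hi⟩ := p.2
  have d1 : dd m p.1 = (apx m p.1.1 - p.1.2) + (p.1.2 - apx m p.1.1) + cst m p.1.1 := rfl
  rcases Nat.lt_or_ge p.1.2 (apx m p.1.1) with hlt | hge
  · have hb : p.1.2 + 1 ≤ 2 * m := le_trans hlt (apx_le hm hk1 hk2)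
    refine ⟨⟨(p.1.1, p.1.2 + 1), ⟨hk1, hk2, hb⟩⟩, Or.inl ⟨rfl, rfl⟩, ?_⟩
    show dd m (p.1.1, p.1.2 + 1) + 1 = dd m p.1
    have d2 : dd m (p.1.1, p.1.2 + 1) = (apx m p.1.1 - (p.1.2 + 1)) +
        ((p.1.2 + 1) - apx m p.1.1) + cst m p.1.1 := rfl
    omega
  · have hge' : apx m p.1.1 < p.1.2 := by omega
    refine ⟨⟨(p.1.1, p.1.2 - 1), ⟨hk1, hk2, by omega⟩⟩,
      Or.inr ⟨rfl, by show p.1.2 - 1 + 1 = p.1.2; omega⟩, ?_⟩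
    show dd m (p.1.1, p.1.2 - 1) + 1 = dd m p.1
    have d2 : dd m (p.1.1, p.1.2 - 1) = (apx m p.1.1 - (p.1.2 - 1)) +
        ((p.1.2 - 1) - apx m p.1.1) + cst m p.1.1 := rfl
    omega

lemma VOk_mk {m k i : ℕ} (h1 : 1 ≤ k) (h2 : k ≤ 4 * m + 2) (h3 : i ≤ 2 * m) :
    VOk m (k, i) := ⟨h1, h2, h3⟩

lemma mkQ_glue {m : ℕ} {a b : Vm m} (h : glueRel m a b) : mkQ m a = mkQ m b := Quot.sound h

lemma nonapex_exists {m : ℕ} (hm : 8 ≤ m) (x : Vm m) (hne : dd m x.1 ≠ 0) :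
    ∃ p : Vm m, mkQ m x = mkQ m p ∧ p.1.2 ≠ apx m p.1.1 := by
  by_cases hna : x.1.2 = apx m x.1.1
  swap
  · exact ⟨x, rfl, hna⟩
  obtain ⟨⟨k, i⟩, hok⟩ := x
  obtain ⟨hk1, hk2, hi⟩ := hok
  simp only at hna hne ⊢
  have d1 : dd m (k, i) = (apx m k - i) + (i - apx m k) + cst m k := rfl
  rcases (by omega : k = 1 ∨ (2 ≤ k ∧ k ≤ m) ∨ (m + 1 ≤ k ∧ k ≤ 2 * m - 1) ∨ k = 2 * m ∨
      (2 * m + 1 ≤ k ∧ k ≤ 3 * m) ∨ (3 * m + 1 ≤ k ∧ k ≤ 4 * m) ∨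
      k = 4 * m + 1 ∨ k = 4 * m + 2) with h1 | h1 | h1 | h1 | h1 | h1 | h1 | h1
  · exfalso; subst h1; have e := apx1 (m := m); omega
  · have e := apx2 h1.1 h1.2
    refine ⟨⟨(k - 1, k - 2), VOk_mk (by omega) (by omega) (by omega)⟩, ?_, ?_⟩
    · refine (mkQ_glue ?_).symm
      exact Or.inl ⟨k - 1, by omega, by omega,
        (by rw [Prod.mk.injEq]; omega : ((k : ℕ) - 1, k - 2) = (k - 1, k - 1 - 1)),
        (by rw [Prod.mk.injEq]; omega : ((k : ℕ), i) = (k - 1 + 1, k - 1 + 2))⟩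
    · show (k : ℕ) - 2 ≠ apx m (k - 1)
      rcases (by omega : k = 2 ∨ 3 ≤ k) with h2 | h2
      · subst h2; have := apx1 (m := m); show (0 : ℕ) ≠ apx m 1; omega
      · have := apx2 (by omega : 2 ≤ k - 1) (by omega : k - 1 ≤ m); omega
  · have e := apx3 h1.1 (by omega)
    refine ⟨⟨(k + 1, k + 1), VOk_mk (by omega) (by omega) (by omega)⟩, ?_, ?_⟩
    · refine mkQ_glue ?_
      exact Or.inr (Or.inl ⟨k, h1.1, by omega,
        (by rw [Prod.mk.injEq]; omega : ((k : ℕ), i) = (k, k - 2)), rfl⟩)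
    · show (k : ℕ) + 1 ≠ apx m (k + 1)
      have := apx3 (by omega : m + 1 ≤ k + 1) (by omega : k + 1 ≤ 2 * m); omega
  · have e := apx3 (by omega : m + 1 ≤ k) (by omega : k ≤ 2 * m)
    refine ⟨⟨(1, 2), VOk_mk (by omega) (by omega) (by omega)⟩, ?_, ?_⟩
    · refine (mkQ_glue ?_).symm
      exact Or.inr (Or.inr (Or.inl ⟨rfl,
        (by rw [Prod.mk.injEq]; omega : ((k : ℕ), i) = (2 * m, 2 * m - 2))⟩))
    · show (2 : ℕ) ≠ apx m 1
      have := apx1 (m := m); omega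
  · have e := apx4 h1.1 h1.2
    have ht2 : 2 * m + 2 ≤ k := by
      rcases (by omega : k = 2 * m + 1 ∨ 2 * m + 2 ≤ k) with h2 | h2
      · exfalso; omega
      · exact h2
    refine ⟨⟨(k - 2 * m, k - 2 * m), VOk_mk (by omega) (by omega) (by omega)⟩, ?_, ?_⟩
    · refine (mkQ_glue ?_).symm
      exact Or.inr (Or.inr (Or.inr (Or.inl ⟨k - 2 * m, by omega, by omega, rfl,
        (by rw [Prod.mk.injEq]; omega : ((k : ℕ), i) = (2 * m + (k - 2 * m), 2 * m - 5))⟩)))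
    · show (k : ℕ) - 2 * m ≠ apx m (k - 2 * m)
      have := apx2 (by omega : 2 ≤ k - 2 * m) (by omega : k - 2 * m ≤ m); omega
  · have e := apx5 h1.1 h1.2
    refine ⟨⟨(k - 2 * m, k - 2 * m - 1), VOk_mk (by omega) (by omega) (by omega)⟩, ?_, ?_⟩
    · refine (mkQ_glue ?_).symm
      exact Or.inr (Or.inr (Or.inr (Or.inr (Or.inl ⟨k - 2 * m, by omega, by omega,
        rfl,
        (by rw [Prod.mk.injEq]; omega : ((k : ℕ), i) = (2 * m + (k - 2 * m), 5))⟩))))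
    · show (k : ℕ) - 2 * m - 1 ≠ apx m (k - 2 * m)
      have := apx3 (by omega : m + 1 ≤ k - 2 * m) (by omega : k - 2 * m ≤ 2 * m); omega
  · have e : apx m k = 6 := by rw [h1]; exact (apx6 (by omega)).1
    refine ⟨⟨(1, 0), VOk_mk (by omega) (by omega) (by omega)⟩, ?_, ?_⟩
    · refine (mkQ_glue ?_).symm
      exact Or.inr (Or.inr (Or.inr (Or.inr (Or.inr (Or.inl ⟨rfl,
        (by rw [Prod.mk.injEq]; omega : ((k : ℕ), i) = (4 * m + 1, 6))⟩)))))
    · show (0 : ℕ) ≠ apx m 1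
      have := apx1 (m := m); omega
  · have e : apx m k = 2 * m - 6 := by rw [h1]; exact (apx7 (by omega)).1
    refine ⟨⟨(2 * m, 2 * m), VOk_mk (by omega) (by omega) (by omega)⟩, ?_, ?_⟩
    · refine mkQ_glue ?_
      exact Or.inr (Or.inr (Or.inr (Or.inr (Or.inr (Or.inr
        ⟨(by rw [Prod.mk.injEq]; omega : ((k : ℕ), i) = (4 * m + 2, 2 * m - 6)), rfl⟩)))))
    · show (2 : ℕ) * m ≠ apx m (2 * m)
      have := apx3 (by omega : m + 1 ≤ 2 * m) (by omega : 2 * m ≤ 2 * m); omega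

open SimpleGraph Walk in
lemma cyc_aux {V : Type*} {G : SimpleGraph V} (D : V → ℕ)
    (grading : ∀ q q', G.Adj q q' → D q' + 1 = D q ∨ D q + 1 = D q')
    (udown : ∀ q q1 q2, G.Adj q q1 → G.Adj q q2 → D q1 + 1 = D q → D q2 + 1 = D q → q1 = q2) :
    G.IsAcyclic := by
  classical
  have key : ∀ (u : V) (c : G.Walk u u), c.IsCycle → (∀ w ∈ c.support, D w ≤ D u) → False := by
    intro u c hc hmax
    cases c with
    | nil => exact hc.ne_nil rfl
    | @cons _ w _ h q =>
      have hwmem : w ∈ (Walk.cons h q).support := by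
        simp only [Walk.support_cons]
        exact List.mem_cons_of_mem _ q.start_mem_support
      have hD1 : D w + 1 = D u := by
        rcases grading _ _ h with h' | h'
        · exact h'
        · have := hmax w hwmem; omega
      cases hq : q.reverse with
      | nil =>
        have : q = Walk.nil := by
          have := congrArg Walk.reverse hq
          rwa [Walk.reverse_reverse, Walk.reverse_nil] at this
        subst this
        omega
      | @cons _ w₂ _ h₂ q₂ =>
        have hw₂q : w₂ ∈ q.support := by
          have : w₂ ∈ q.reverse.support := by
            rw [hq]
            simp only [Walk.support_cons]
            exact List.mem_cons_of_mem _ q₂.start_mem_support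
          rwa [Walk.support_reverse, List.mem_reverse] at this
        have hw₂mem : w₂ ∈ (Walk.cons h q).support := by
          simp only [Walk.support_cons]; exact List.mem_cons_of_mem _ hw₂q
        have hD2 : D w₂ + 1 = D u := by
          rcases grading _ _ h₂ with h' | h'
          · exact h'
          · have := hmax w₂ hw₂mem; omega
        have heq : w = w₂ := udown u w w₂ h h₂ hD1 hD2
        have hmemE : s(u, w₂) ∈ q.edges := by
          have : s(u, w₂) ∈ q.reverse.edges := by
            rw [hq]; simp only [Walk.edges_cons]; exact List.mem_cons_self
          rwa [Walk.edges_reverse, List.mem_reverse] at this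
        have hnd : ((Walk.cons h q).edges).Nodup := hc.isCircuit.isTrail.edges_nodup
        rw [Walk.edges_cons, List.nodup_cons] at hnd
        exact hnd.1 (heq ▸ hmemE)
  intro v c hc
  have hne : c.support.toFinset.Nonempty := ⟨v, List.mem_toFinset.mpr c.start_mem_support⟩
  obtain ⟨u, hum, humax⟩ := Finset.exists_max_image c.support.toFinset D hne
  have hum' : u ∈ c.support := List.mem_toFinset.mp hum
  refine key u (c.rotate u hum') (hc.rotate hum') ?_
  intro w hw
  have hw' : w ∈ c.support := by
    rw [Walk.support_eq_cons, List.mem_cons] at hw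
    rcases hw with hw | hw
    · exact hw ▸ hum'
    · have : w ∈ c.support.tail := ((Walk.support_rotate c u hum').perm.mem_iff).mp hw
      rw [Walk.support_eq_cons c]
      exact List.mem_cons_of_mem _ this
  exact humax w (List.mem_toFinset.mpr hw')

def DQ (m : ℕ) (hm : 8 ≤ m) : Qm m → ℕ :=
  Quot.lift (fun v => dd m v.1) (fun a b h => dd_glue hm a b h)

lemma DQ_mk (m : ℕ) (hm : 8 ≤ m) (x : Vm m) : DQ m hm (mkQ m x) = dd m x.1 := rfl

lemma grading (m : ℕ) (hm : 8 ≤ m) : ∀ q q', (Gm m).Adj q q' →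
    DQ m hm q' + 1 = DQ m hm q ∨ DQ m hm q + 1 = DQ m hm q' := by
  rintro q q' ⟨-, x, y, hor, rfl, rfl⟩
  rw [DQ_mk, DQ_mk]
  have d1 : dd m x.1 = (apx m x.1.1 - x.1.2) + (x.1.2 - apx m x.1.1) + cst m x.1.1 := rfl
  have d2 : dd m y.1 = (apx m y.1.1 - y.1.2) + (y.1.2 - apx m y.1.1) + cst m y.1.1 := rfl
  rcases hor with ⟨hk, hi⟩ | ⟨hk, hi⟩
  · rw [hk] at d1; omega
  · rw [hk] at d2; omega

lemma udown (m : ℕ) (hm : 8 ≤ m) : ∀ q q1 q2, (Gm m).Adj q q1 → (Gm m).Adj q q2 →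
    DQ m hm q1 + 1 = DQ m hm q → DQ m hm q2 + 1 = DQ m hm q → q1 = q2 := by
  rintro q q1 q2 ⟨-, x, y, hor, rfl, rfl⟩ ⟨-, x', y', hor', hq, rfl⟩ h1 h2
  rw [DQ_mk, DQ_mk] at h1
  rw [DQ_mk] at h2
  rw [hq, DQ_mk] at h2
  have hddx : dd m x'.1 = dd m x.1 := dd_mkQ hm hq.symm
  have d1x : dd m x.1 = (apx m x.1.1 - x.1.2) + (x.1.2 - apx m x.1.1) + cst m x.1.1 := rfl
  have d2y : dd m y.1 = (apx m y.1.1 - y.1.2) + (y.1.2 - apx m y.1.1) + cst m y.1.1 := rfl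
  have d1x' : dd m x'.1 = (apx m x'.1.1 - x'.1.2) + (x'.1.2 - apx m x'.1.1) + cst m x'.1.1 := rfl
  have d2y' : dd m y'.1 = (apx m y'.1.1 - y'.1.2) + (y'.1.2 - apx m y'.1.1) + cst m y'.1.1 := rfl
  have hy : y.1.1 = x.1.1 ∧ (y.1.2 = x.1.2 + 1 ∨ y.1.2 + 1 = x.1.2) := by
    rcases hor with ⟨a, b⟩ | ⟨a, b⟩
    · exact ⟨a.symm, Or.inl b.symm⟩
    · exact ⟨a, Or.inr b⟩
  have hy' : y'.1.1 = x'.1.1 ∧ (y'.1.2 = x'.1.2 + 1 ∨ y'.1.2 + 1 = x'.1.2) := by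
    rcases hor' with ⟨a, b⟩ | ⟨a, b⟩
    · exact ⟨a.symm, Or.inl b.symm⟩
    · exact ⟨a, Or.inr b⟩
  rw [hy.1] at d2y
  rw [hy'.1] at d2y'
  have hax : x.1.2 ≠ apx m x.1.1 := by omega
  have hax' : x'.1.2 ≠ apx m x'.1.1 := by omega
  have hxx : x.1 = x'.1 := by
    have h3 := nu_mkQ hm hq
    rwa [nu_fix hm x.2 hax, nu_fix hm x'.2 hax'] at h3
  have hxx1 : x.1.1 = x'.1.1 := by rw [hxx]
  have hxx2 : x.1.2 = x'.1.2 := by rw [hxx]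
  rw [← hxx1] at d2y' d1x'
  have : y.1 = y'.1 := by
    have e1 : y.1.1 = y'.1.1 := by omega
    have e2 : y.1.2 = y'.1.2 := by omega
    exact Prod.ext e1 e2
  exact congrArg (mkQ m) (Subtype.ext this)

def rtV (m : ℕ) (hm : 8 ≤ m) : Vm m :=
  ⟨(1, 1), VOk_mk (le_refl 1) (by omega) (by omega)⟩

lemma reach (m : ℕ) (hm : 8 ≤ m) : ∀ (n : ℕ) (x : Vm m), dd m x.1 = n →
    (Gm m).Reachable (mkQ m x) (mkQ m (rtV m hm)) := by
  intro n
  induction n using Nat.strong_induction_on with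
  | _ n ih =>
    intro x hx
    rcases Nat.eq_zero_or_pos n with h0 | h0
    · subst h0
      rcases dd_zero hm x.2 hx with h | h
      · have hx1 : x = rtV m hm := Subtype.ext (by rw [h]; rfl)
        rw [hx1]
      · have hg : glueRel m (rtV m hm) x := Or.inr (Or.inr (Or.inr (Or.inl
          ⟨1, le_refl 1, by omega, rfl, by rw [h]⟩)))
        rw [show mkQ m x = mkQ m (rtV m hm) from (mkQ_glue hg).symm]
    · obtain ⟨p, hxp, hna⟩ := nonapex_exists hm x (by omega)
      obtain ⟨z, hedge, hdz⟩ := step_exists hm p hna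
      have hdp : dd m p.1 = n := by rw [← hx]; exact (dd_mkQ hm hxp).symm
      have hne2 : mkQ m p ≠ mkQ m z := by
        intro hEq; have := dd_mkQ hm hEq; omega
      have hadj : (Gm m).Adj (mkQ m p) (mkQ m z) := ⟨hne2, p, z, hedge, rfl, rfl⟩
      have hr := ih (dd m z.1) (by omega) z rfl
      rw [hxp]
      exact hadj.reachable.trans hr

/-- for every `m ≥ 8`, the graph `G_m` is a connected tree. -/
theorem statement9 (m : ℕ) (hm : 8 ≤ m) : (Gm m).IsTree := by
  constructor
  · rw [SimpleGraph.connected_iff]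
    constructor
    · intro u v
      obtain ⟨x, rfl⟩ := Quot.exists_rep u
      obtain ⟨y, rfl⟩ := Quot.exists_rep v
      exact (reach m hm _ x rfl).trans (reach m hm _ y rfl).symm
    · exact ⟨mkQ m (rtV m hm)⟩
  · exact cyc_aux (DQ m hm) (grading m hm) (udown m hm)
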